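/- Let X be an n×n real matrix and K ⊆ ℝ^n a proper cone. If S^{-1} X (T^t)^{-1} is entrywise nonnegative for all invertible matrices S with S(ℝ^n_+) ⊆ K and all invertible matrices T with T(ℝ^n_+) ⊆ K^*, then X(K) ⊆ K. -/

import Mathlib

open Matrix Set

/-- The nonnegative orthant in `ℝ^n`. -/
def posOrth (n : ℕ) : Set (Fin n → ℝ) := {x | ∀ i, 0 ≤ x i}

/-- A proper cone: closed, pointed convex cone with nonempty interior. -/
def IsProperCone {n : ℕ} (K : Set (Fin n → ℝ)) : Prop :=
  (∀ x ∈ K, ∀ y ∈ K, x + y ∈ K) ∧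
  (∀ (c : ℝ), 0 ≤ c → ∀ x ∈ K, c • x ∈ K) ∧
  IsClosed K ∧ K ∩ (-K) = {0} ∧ (interior K).Nonempty

/-- The dual cone of a set in `ℝ^n`. -/
def dualCone {n : ℕ} (K : Set (Fin n → ℝ)) : Set (Fin n → ℝ) :=
  {y | ∀ x ∈ K, 0 ≤ y ⬝ᵥ x}

/-- `(K₁,K₂)`-semipositivity of a matrix. -/
def SemiposCone {n m : ℕ} (K₁ : Set (Fin n → ℝ)) (K₂ : Set (Fin m → ℝ))
    (A : Matrix (Fin m) (Fin n) ℝ) : Prop :=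
  ∃ x ∈ interior K₁, A.mulVec x ∈ interior K₂

/-- Semipositivity with respect to the nonnegative orthants. -/
def Semipos {n m : ℕ} (A : Matrix (Fin m) (Fin n) ℝ) : Prop :=
  ∃ x : Fin n → ℝ, (∀ i, 0 < x i) ∧ ∀ j, 0 < A.mulVec x j

lemma exists_matrix_of_cone {n : ℕ} (C : Set (Fin n → ℝ))
    (hadd : ∀ x ∈ C, ∀ y ∈ C, x + y ∈ C)
    (hsmul : ∀ (c : ℝ), 0 ≤ c → ∀ x ∈ C, c • x ∈ C)
    (h0 : (0 : Fin n → ℝ) ∈ C)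
    (hspan : Submodule.span ℝ C = ⊤) :
    ∃ M : Matrix (Fin n) (Fin n) ℝ, IsUnit M.det ∧ ∀ x ∈ posOrth n, M.mulVec x ∈ C := by
  obtain ⟨s, hsC, hs, hli⟩ := exists_linearIndependent ℝ C
  have hspan' : ⊤ ≤ Submodule.span ℝ (Set.range ((↑) : s → (Fin n → ℝ))) := by
    rw [Subtype.range_coe, hs, hspan]
  let b : Module.Basis s ℝ (Fin n → ℝ) := Module.Basis.mk hli hspan'
  have e : s ≃ Fin n := b.indexEquiv (Pi.basisFun ℝ (Fin n))
  let b' : Module.Basis (Fin n) ℝ (Fin n → ℝ) := b.reindex e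
  have hb'C : ∀ j, b' j ∈ C := by
    intro j
    have : b' j = (e.symm j : Fin n → ℝ) := by
      simp [b', Module.Basis.reindex_apply, b, Module.Basis.mk_apply]
    rw [this]
    exact hsC (e.symm j).2
  refine ⟨(Pi.basisFun ℝ (Fin n)).toMatrix b', ?_, ?_⟩
  · have := (Pi.basisFun ℝ (Fin n)).invertibleToMatrix b'
    exact Matrix.isUnit_det_of_invertible _
  · intro x hx
    have hM : ∀ i j, (Pi.basisFun ℝ (Fin n)).toMatrix b' i j = b' j i := by
      intro i j; simp [Module.Basis.toMatrix_apply]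
    have : ((Pi.basisFun ℝ (Fin n)).toMatrix ⇑b').mulVec x = ∑ j, x j • b' j := by
      funext i
      simp [Matrix.mulVec, dotProduct, hM, Finset.sum_apply, mul_comm]
    rw [this]
    refine Finset.sum_induction _ (· ∈ C) (fun a b ha hb => hadd a ha b hb) h0 ?_
    intro j _
    exact hsmul (x j) (hx j) _ (hb'C j)

lemma zero_mem_of_proper {n : ℕ} {K : Set (Fin n → ℝ)} (hK : IsProperCone K) :
    (0 : Fin n → ℝ) ∈ K := by
  have : (0 : Fin n → ℝ) ∈ K ∩ (-K) := by rw [hK.2.2.2.1]; rfl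
  exact this.1


lemma span_dual_eq_top {n : ℕ} (K : Set (Fin n → ℝ)) (hK : IsProperCone K) :
    Submodule.span ℝ (dualCone K) = ⊤ := by
  obtain ⟨hadd, hsmul, hclosed, hpointed, hint⟩ := hK
  let E := EuclideanSpace ℝ (Fin n)
  let D : Set E := WithLp.ofLp ⁻¹' dualCone K
  let K' : ProperCone ℝ E :=
    { carrier := WithLp.ofLp ⁻¹' K
      smul_mem' := fun c x hx => by
        show WithLp.ofLp (c • x) ∈ K
        rw [WithLp.ofLp_smul]
        exact hsmul (c : ℝ) c.2 _ hx
      add_mem' := fun {x y} hx hy => by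
        show WithLp.ofLp (x + y) ∈ K
        rw [WithLp.ofLp_add]
        exact hadd _ hx _ hy
      zero_mem' := by simpa using zero_mem_of_proper ⟨hadd, hsmul, hclosed, hpointed, hint⟩
      isClosed' := hclosed.preimage (PiLp.continuous_ofLp 2 _) }
  have key : ∀ v : E, (∀ y ∈ D, (inner ℝ y v : ℝ) = 0) → (v : Fin n → ℝ) ∈ K := by
    intro v hv
    by_contra hvK
    obtain ⟨y, hy1, hy2⟩ :=
      K'.hyperplane_separation' (x₀ := v) hvK
    have hip : ∀ a b : EuclideanSpace ℝ (Fin n), (inner ℝ a b : ℝ) = ∑ i, a i * b i := by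
      intro a b
      rw [PiLp.inner_apply]
      simp [RCLike.inner_apply, mul_comm]
    have hyd : y ∈ D := by
      intro x hx
      have h' := hy1 (WithLp.toLp 2 x) hx
      rw [hip] at h'
      simpa [dotProduct, mul_comm] using h'
    have h0 := hv y hyd
    rw [real_inner_comm, h0] at hy2
    exact lt_irrefl 0 hy2
  have hW : (Submodule.span ℝ D)ᗮ = ⊥ := by
    rw [Submodule.eq_bot_iff]
    intro v hv
    rw [Submodule.mem_orthogonal] at hv
    have hv' : ∀ y ∈ D, (inner ℝ y v : ℝ) = 0 := fun y hy => hv y (Submodule.subset_span hy)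
    have h1 : (v : Fin n → ℝ) ∈ K := key v hv'
    have h2 : (-v : Fin n → ℝ) ∈ K := by
      refine key (-v) ?_
      intro y hy
      rw [inner_neg_right, hv' y hy, neg_zero]
    have hm : (v : Fin n → ℝ) ∈ K ∩ (-K) := ⟨h1, by simpa using h2⟩
    rw [hpointed] at hm
    simpa using hm
  have htop : Submodule.span ℝ D = ⊤ := by
    rw [← Submodule.orthogonal_orthogonal (Submodule.span ℝ D), hW,
      Submodule.bot_orthogonal_eq_top]
  -- transfer to the plain pi type via the identity linear equivalence
  let f := WithLp.linearEquiv 2 ℝ (Fin n → ℝ)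
  have himg : ⇑f '' D = dualCone K := by
    ext z
    constructor
    · rintro ⟨w, hw, rfl⟩; exact hw
    · intro hz; exact ⟨WithLp.toLp 2 z, hz, rfl⟩
  rw [← himg, Submodule.span_image_linearEquiv, htop, Submodule.map_top]
  simp

lemma span_of_interior {n : ℕ} (C : Set (Fin n → ℝ)) (h : (interior C).Nonempty) :
    Submodule.span ℝ C = ⊤ := by
  refine Submodule.eq_top_of_nonempty_interior' _ ?_
  exact h.mono (interior_mono Submodule.subset_span)

theorem stmt_13 {n : ℕ} (K : Set (Fin n → ℝ)) (hK : IsProperCone K)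
    (X : Matrix (Fin n) (Fin n) ℝ)
    (h : ∀ S T : Matrix (Fin n) (Fin n) ℝ, IsUnit S.det → IsUnit T.det →
      (∀ x ∈ posOrth n, S.mulVec x ∈ K) →
      (∀ x ∈ posOrth n, T.mulVec x ∈ dualCone K) →
      ∀ i j, 0 ≤ (S⁻¹ * X * (Tᵀ)⁻¹) i j) :
    ∀ x ∈ K, X.mulVec x ∈ K := by
  intro x hx
  obtain ⟨hadd, hsmul, hclosed, hpointed, hint⟩ := hK
  have hK' : IsProperCone K := ⟨hadd, hsmul, hclosed, hpointed, hint⟩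
  have h0K : (0 : Fin n → ℝ) ∈ K := zero_mem_of_proper hK'
  obtain ⟨S, hSdet, hS⟩ := exists_matrix_of_cone K hadd hsmul h0K (span_of_interior K hint)
  obtain ⟨T, hTdet, hT⟩ := exists_matrix_of_cone (dualCone K)
    (fun a ha b hb x hxK => by
      rw [add_dotProduct]; exact add_nonneg (ha x hxK) (hb x hxK))
    (fun c hc a ha x hxK => by
      rw [smul_dotProduct]; exact smul_nonneg hc (ha x hxK))
    (fun x hxK => by rw [zero_dotProduct])
    (span_dual_eq_top K hK')
  have hM := h S T hSdet hTdet hS hT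
  set M := S⁻¹ * X * (Tᵀ)⁻¹ with hMdef
  have hTt : IsUnit (Tᵀ).det := by rwa [Matrix.det_transpose]
  have hX : X = S * M * Tᵀ := by
    rw [hMdef]
    rw [show S * (S⁻¹ * X * (Tᵀ)⁻¹) * Tᵀ = (S * S⁻¹) * X * ((Tᵀ)⁻¹ * Tᵀ) by
      simp only [Matrix.mul_assoc]]
    rw [Matrix.mul_nonsing_inv _ hSdet, Matrix.nonsing_inv_mul _ hTt, Matrix.one_mul,
      Matrix.mul_one]
  have hy : (Tᵀ).mulVec x ∈ posOrth n := by
    intro j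
    have hcol : T.mulVec (Pi.single j 1) ∈ dualCone K :=
      hT _ (fun i => by
        rcases eq_or_ne i j with rfl | hij
        · simp
        · simp [Pi.single_eq_of_ne hij])
    have := hcol x hx
    simpa [Matrix.mulVec, dotProduct, Matrix.transpose_apply, Pi.single_apply,
      Finset.mul_sum, mul_comm] using this
  have hz : M.mulVec ((Tᵀ).mulVec x) ∈ posOrth n := by
    intro i
    simp only [Matrix.mulVec, dotProduct] at hy ⊢
    apply Finset.sum_nonneg
    intro j _
    exact mul_nonneg (hM i j) (hy j)
  have : X.mulVec x = S.mulVec (M.mulVec ((Tᵀ).mulVec x)) := by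
    rw [Matrix.mulVec_mulVec, Matrix.mulVec_mulVec, ← hX]
  rw [this]
  exact hS _ hz
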